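/- (Uniqueness of the index of a fold point.) Let m ≥ n ≥ 1 be integers and let i, i′ be integers with 0 ≤ i ≤ (m−n+1)/2 and 0 ≤ i′ ≤ (m−n+1)/2. Suppose there exist open neighborhoods U, U′ of 0 in ℝᵐ and V, V′ of 0 in ℝⁿ, and C^∞ diffeomorphisms Φ : U → U′ and Ψ : V → V′ with Φ(0) = 0 and Ψ(0) = 0, such that g_{m,n,i′}(Φ(x)) = Ψ(g_{m,n,i}(x)) for every x ∈ U (where g_{m,n,i}(U) ⊆ V). Then i = i′. -/

import Mathlib

/-- The fold normal form `g_{m,n,i} : ℝᵐ → ℝⁿ` (0-indexed coordinates): the first `n - 1`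
components are the coordinate functions `x₀, …, x_{n-2}`, and the last component is
`∑_{n-1 ≤ j < m-i} x_j² − ∑_{m-i ≤ j < m} x_j²`. -/
def foldNormalForm (m n i : ℕ) (x : EuclideanSpace ℝ (Fin m)) : EuclideanSpace ℝ (Fin n) :=
  WithLp.toLp 2 fun k =>
    if _hk : (k : ℕ) < n - 1 then (if h : (k : ℕ) < m then x ⟨(k : ℕ), h⟩ else 0)
    else
      ∑ j : Fin m,
        (if (j : ℕ) < n - 1 then 0 else if (j : ℕ) < m - i then x j ^ 2 else -(x j ^ 2))

open Filter Topology

namespace FoldAux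

def qf (m n l : ℕ) (x : EuclideanSpace ℝ (Fin m)) : ℝ :=
  ∑ j : Fin m, (if (j : ℕ) < n - 1 then 0 else if (j : ℕ) < m - l then x j ^ 2 else -(x j ^ 2))

lemma qf_continuous (m n l : ℕ) : Continuous (qf m n l) := by
  refine continuous_finset_sum _ fun j _ => ?_
  have hj : Continuous fun x : EuclideanSpace ℝ (Fin m) => x j :=
    (EuclideanSpace.proj j).continuous
  split_ifs <;> [exact continuous_const; fun_prop; fun_prop]

lemma qf_smul (m n l : ℕ) (t : ℝ) (x : EuclideanSpace ℝ (Fin m)) :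
    qf m n l (t • x) = t ^ 2 * qf m n l x := by
  unfold qf
  rw [Finset.mul_sum]
  refine Finset.sum_congr rfl fun j _ => ?_
  split_ifs <;> simp [PiLp.smul_apply, smul_eq_mul] <;> ring

lemma fold_apply_low {m n : ℕ} (l : ℕ) (hnm : n ≤ m) (x : EuclideanSpace ℝ (Fin m))
    (k : Fin n) (hk : (k : ℕ) < n - 1) :
    foldNormalForm m n l x k = x ⟨(k : ℕ), by omega⟩ := by
  have hkm : (k : ℕ) < m := by omega
  simp [foldNormalForm, hk, hkm]

lemma fold_apply_high {m n : ℕ} (l : ℕ) (x : EuclideanSpace ℝ (Fin m))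
    (k : Fin n) (hk : ¬ (k : ℕ) < n - 1) :
    foldNormalForm m n l x k = qf m n l x := by
  simp [foldNormalForm, hk, qf]

lemma lim_aux {E F : Type*} [NormedAddCommGroup E] [NormedSpace ℝ E] [NormedAddCommGroup F]
    [NormedSpace ℝ F] {f : E → F} {A : E →L[ℝ] F} (hf : HasFDerivAt f A 0) (h0 : f 0 = 0)
    (u : E) :
    Tendsto (fun t : ℝ => t⁻¹ • f (t • u)) (𝓝[≠] (0 : ℝ)) (𝓝 (A u)) := by
  have hc : Tendsto (fun t : ℝ => ‖t⁻¹‖) (𝓝[≠] (0 : ℝ)) atTop := by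
    have h1 : Tendsto (fun t : ℝ => |t|) (𝓝[≠] (0 : ℝ)) (𝓝[>] 0) := by
      apply tendsto_nhdsWithin_of_tendsto_nhds_of_eventually_within
      · exact (continuous_abs.tendsto' 0 0 abs_zero).mono_left nhdsWithin_le_nhds
      · exact eventually_mem_nhdsWithin.mono fun t ht => abs_pos.2 ht
    have := tendsto_inv_nhdsGT_zero.comp h1
    simpa [Real.norm_eq_abs, abs_inv, Function.comp_def] using this
  have := hf.lim u hc
  simpa [h0, inv_inv] using this

def bIn (m a off : ℕ) : (Fin a → ℝ) →ₗ[ℝ] EuclideanSpace ℝ (Fin m) where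
  toFun w := WithLp.toLp 2 fun j =>
    if h2 : off ≤ (j : ℕ) ∧ (j : ℕ) < off + a then w ⟨(j : ℕ) - off, by omega⟩ else 0
  map_add' w v := by
    ext j
    by_cases h2 : off ≤ (j : ℕ) ∧ (j : ℕ) < off + a <;> simp [h2, PiLp.add_apply]
  map_smul' t w := by
    ext j
    by_cases h2 : off ≤ (j : ℕ) ∧ (j : ℕ) < off + a <;> simp [h2, PiLp.smul_apply]

def bOut (m b off : ℕ) : EuclideanSpace ℝ (Fin m) →ₗ[ℝ] (Fin b → ℝ) where
  toFun x := fun a => if h : off + (a : ℕ) < m then x ⟨off + (a : ℕ), h⟩ else 0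
  map_add' x y := by
    funext a
    by_cases h : off + (a : ℕ) < m <;> simp [h, PiLp.add_apply]
  map_smul' t x := by
    funext a
    by_cases h : off + (a : ℕ) < m <;> simp [h, PiLp.smul_apply]

lemma bIn_apply_of_lt (m a off : ℕ) (w : Fin a → ℝ) (j : Fin m) (h : (j : ℕ) < off) :
    bIn m a off w j = 0 := by
  simp only [bIn, LinearMap.coe_mk, AddHom.coe_mk, PiLp.toLp_apply]
  rw [dif_neg]; omega

lemma bIn_apply_of_ge (m a off : ℕ) (w : Fin a → ℝ) (j : Fin m) (h : off + a ≤ (j : ℕ)) :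
    bIn m a off w j = 0 := by
  simp only [bIn, LinearMap.coe_mk, AddHom.coe_mk, PiLp.toLp_apply]
  rw [dif_neg]; omega

lemma le_of_inj {a b : ℕ} (f : (Fin a → ℝ) →ₗ[ℝ] (Fin b → ℝ))
    (hf : Function.Injective f) : a ≤ b := by
  simpa [Module.finrank_fin_fun] using LinearMap.finrank_le_finrank_of_injective hf

lemma qf_nonneg_of_high_zero (m n l : ℕ) (x : EuclideanSpace ℝ (Fin m))
    (hx : ∀ j : Fin m, m - l ≤ (j : ℕ) → x j = 0) : 0 ≤ qf m n l x := by
  refine Finset.sum_nonneg fun j _ => ?_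
  by_cases h1 : (j : ℕ) < n - 1
  · simp [h1]
  · by_cases h2 : (j : ℕ) < m - l
    · simp only [h1, if_false, h2, if_true]; positivity
    · simp [h1, h2, hx j (le_of_not_gt h2)]

lemma qf_nonpos_of_mid_zero (m n l : ℕ) (x : EuclideanSpace ℝ (Fin m))
    (hx : ∀ j : Fin m, n - 1 ≤ (j : ℕ) → (j : ℕ) < m - l → x j = 0) : qf m n l x ≤ 0 := by
  refine Finset.sum_nonpos fun j _ => ?_
  by_cases h1 : (j : ℕ) < n - 1
  · simp [h1]
  · by_cases h2 : (j : ℕ) < m - l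
    · simp [h1, h2, hx j (le_of_not_gt h1) h2]
    · simp only [h1, if_false, h2]
      have : (0:ℝ) ≤ x j ^ 2 := sq_nonneg _
      linarith

lemma exists_ne_zero {a : ℕ} {w : Fin a → ℝ} (hw : w ≠ 0) : ∃ c, w c ≠ 0 := by
  by_contra h
  push_neg at h
  exact hw (funext h)

lemma qf_bIn_neg (m n l : ℕ) (hl : n - 1 ≤ m - l) (hlm : l ≤ m) {w : Fin l → ℝ} (hw : w ≠ 0) :
    qf m n l (bIn m l (m - l) w) < 0 := by
  obtain ⟨c, hc⟩ := exists_ne_zero hw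
  have hcalc : qf m n l (bIn m l (m - l) w) < ∑ _j : Fin m, (0:ℝ) := by
    refine Finset.sum_lt_sum (fun j _ => ?_) ⟨⟨m - l + (c:ℕ), by omega⟩, Finset.mem_univ _, ?_⟩
    · by_cases h1 : (j : ℕ) < n - 1
      · simp [h1]
      · by_cases h2 : (j : ℕ) < m - l
        · simp [h1, h2, bIn_apply_of_lt m l (m - l) w j h2]
        · simp only [h1, if_false, h2]
          have : (0:ℝ) ≤ bIn m l (m - l) w j ^ 2 := sq_nonneg _
          linarith
    · have h1 : ¬ ((⟨m - l + (c:ℕ), by omega⟩ : Fin m) : ℕ) < n - 1 := by simp; omega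
      have h2 : ¬ ((⟨m - l + (c:ℕ), by omega⟩ : Fin m) : ℕ) < m - l := by simp
      simp only [h1, if_false, h2]
      have hval : bIn m l (m - l) w ⟨m - l + (c:ℕ), by omega⟩ = w c := by
        simp only [bIn, LinearMap.coe_mk, AddHom.coe_mk, PiLp.toLp_apply]
        rw [dif_pos (by constructor <;> simp [c.isLt])]
        congr 1
        ext
        simp
      rw [hval]
      have := mul_self_pos.mpr hc
      nlinarith [sq_nonneg (w c)]
  simpa using hcalc

lemma qf_bIn_pos (m n l s : ℕ) (hs : (n - 1) + s ≤ m - l) (hlm : m - l ≤ m)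
    {w : Fin s → ℝ} (hw : w ≠ 0) :
    0 < qf m n l (bIn m s (n - 1) w) := by
  obtain ⟨c, hc⟩ := exists_ne_zero hw
  have hcalc : (∑ _j : Fin m, (0:ℝ)) < qf m n l (bIn m s (n - 1) w) := by
    refine Finset.sum_lt_sum (fun j _ => ?_) ⟨⟨n - 1 + (c:ℕ), by omega⟩, Finset.mem_univ _, ?_⟩
    · by_cases h1 : (j : ℕ) < n - 1
      · simp [h1]
      · by_cases h2 : (j : ℕ) < m - l
        · simp only [h1, if_false, h2, if_true]
          exact sq_nonneg _
        · simp [h1, h2, bIn_apply_of_ge m s (n - 1) w j (by omega)]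
    · have h1 : ¬ ((⟨n - 1 + (c:ℕ), by omega⟩ : Fin m) : ℕ) < n - 1 := by simp
      have h2 : ((⟨n - 1 + (c:ℕ), by omega⟩ : Fin m) : ℕ) < m - l := by simp; omega
      simp only [h1, if_false, h2, if_true]
      have hval : bIn m s (n - 1) w ⟨n - 1 + (c:ℕ), by omega⟩ = w c := by
        simp only [bIn, LinearMap.coe_mk, AddHom.coe_mk, PiLp.toLp_apply]
        rw [dif_pos (by constructor <;> simp [c.isLt])]
        congr 1
        ext
        simp
      rw [hval]
      have := mul_self_pos.mpr hc
      nlinarith [sq_nonneg (w c)]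
  simpa using hcalc

end FoldAux

open FoldAux

set_option maxHeartbeats 1000000 in
/-- Uniqueness of the index of a fold point.  Let `m ≥ n ≥ 1` and let `i, i'` be integers
with `0 ≤ i, i' ≤ (m - n + 1)/2`.  If there are open neighborhoods `U, U'` of `0` in `ℝᵐ`
and `V, V'` of `0` in `ℝⁿ` and `C^∞` diffeomorphisms `Φ : U → U'` and `Ψ : V → V'` fixing
`0`, with `g_{m,n,i}(U) ⊆ V` and `g_{m,n,i'} ∘ Φ = Ψ ∘ g_{m,n,i}` on `U`, then `i = i'`. -/
theorem foldNormalForm_index_unique (m n i i' : ℕ) (h1 : 1 ≤ n) (hnm : n ≤ m)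
    (hi : 2 * i ≤ m - n + 1) (hi' : 2 * i' ≤ m - n + 1)
    (U U' : Set (EuclideanSpace ℝ (Fin m))) (V V' : Set (EuclideanSpace ℝ (Fin n)))
    (hUopen : IsOpen U) (hU'open : IsOpen U') (hVopen : IsOpen V) (hV'open : IsOpen V')
    (h0U : 0 ∈ U) (h0V : 0 ∈ V)
    (Φ : EuclideanSpace ℝ (Fin m) → EuclideanSpace ℝ (Fin m))
    (Φinv : EuclideanSpace ℝ (Fin m) → EuclideanSpace ℝ (Fin m))
    (Ψ : EuclideanSpace ℝ (Fin n) → EuclideanSpace ℝ (Fin n))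
    (Ψinv : EuclideanSpace ℝ (Fin n) → EuclideanSpace ℝ (Fin n))
    (hΦ0 : Φ 0 = 0) (hΨ0 : Ψ 0 = 0)
    (hΦim : Φ '' U = U') (hΨim : Ψ '' V = V')
    (hΦsm : ContDiffOn ℝ (⊤ : ℕ∞) Φ U) (hΦinvsm : ContDiffOn ℝ (⊤ : ℕ∞) Φinv U')
    (hΨsm : ContDiffOn ℝ (⊤ : ℕ∞) Ψ V) (hΨinvsm : ContDiffOn ℝ (⊤ : ℕ∞) Ψinv V')
    (hΦleft : ∀ x ∈ U, Φinv (Φ x) = x) (hΦright : ∀ y ∈ U', Φ (Φinv y) = y)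
    (hΨleft : ∀ x ∈ V, Ψinv (Ψ x) = x) (hΨright : ∀ y ∈ V', Ψ (Ψinv y) = y)
    (hmaps : ∀ x ∈ U, foldNormalForm m n i x ∈ V)
    (hconj : ∀ x ∈ U, foldNormalForm m n i' (Φ x) = Ψ (foldNormalForm m n i x)) :
    i = i' := by
  classical
  have hk' : n - 1 < n := by omega
  set k₀ : Fin n := ⟨n - 1, hk'⟩ with hk₀def
  have hk₀ : ¬ ((k₀ : ℕ) < n - 1) := by simp [hk₀def]
  -- derivatives
  have hΦdiff : DifferentiableAt ℝ Φ 0 :=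
    (hΦsm.contDiffAt (hUopen.mem_nhds h0U)).differentiableAt (by simp)
  set A := fderiv ℝ Φ 0 with hAdef
  have hA : HasFDerivAt Φ A 0 := hΦdiff.hasFDerivAt
  have hΨdiff : DifferentiableAt ℝ Ψ 0 :=
    (hΨsm.contDiffAt (hVopen.mem_nhds h0V)).differentiableAt (by simp)
  set D := fderiv ℝ Ψ 0 with hDdef
  have hD : HasFDerivAt Ψ D 0 := hΨdiff.hasFDerivAt
  set c := D (EuclideanSpace.single k₀ 1) k₀ with hcdef
  -- basic limits
  have hQlim : ∀ u : EuclideanSpace ℝ (Fin m),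
      Tendsto (fun t : ℝ => (t ^ 2)⁻¹ * qf m n i' (Φ (t • u))) (𝓝[≠] (0:ℝ))
        (𝓝 (qf m n i' (A u))) := by
    intro u
    have h1 := FoldAux.lim_aux hA hΦ0 u
    have h2 := ((FoldAux.qf_continuous m n i').tendsto (A u)).comp h1
    refine h2.congr fun t => ?_
    show qf m n i' (t⁻¹ • Φ (t • u)) = _
    rw [FoldAux.qf_smul, ← inv_pow]
  have hψlim : ∀ w : EuclideanSpace ℝ (Fin n),
      Tendsto (fun s : ℝ => s⁻¹ * (Ψ (s • w) k₀)) (𝓝[≠] (0:ℝ)) (𝓝 (D w k₀)) := by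
    intro w
    have h1 := FoldAux.lim_aux hD hΨ0 w
    have h2 := ((EuclideanSpace.proj k₀).continuous.tendsto (D w)).comp h1
    refine h2.congr fun t => ?_
    show (t⁻¹ • Ψ (t • w)) k₀ = _
    rw [PiLp.smul_apply, smul_eq_mul]
  have hmemU : ∀ u : EuclideanSpace ℝ (Fin m), ∀ᶠ t : ℝ in 𝓝[≠] 0, t • u ∈ U := by
    intro u
    have h : Tendsto (fun t : ℝ => t • u) (𝓝 (0:ℝ)) (𝓝 0) := by
      have : Tendsto (fun t : ℝ => t • u) (𝓝 0) (𝓝 ((0:ℝ) • u)) :=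
        (continuous_id.smul (continuous_const (y := u))).tendsto (0:ℝ)
      simpa using this
    exact (h.eventually (hUopen.mem_nhds h0U)).filter_mono nhdsWithin_le_nhds
  -- main identity
  have key : ∀ u : EuclideanSpace ℝ (Fin m), (∀ j : Fin m, (j : ℕ) < n - 1 → u j = 0) →
      qf m n i' (A u) = c * qf m n i u := by
    intro u hu
    have hfold : ∀ t : ℝ, foldNormalForm m n i (t • u)
        = (t ^ 2 * qf m n i u) • EuclideanSpace.single k₀ (1:ℝ) := by
      intro t
      apply PiLp.ext
      intro k
      by_cases hk : (k : ℕ) < n - 1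
      · rw [FoldAux.fold_apply_low i hnm _ k hk]
        have h1 : (t • u) ⟨(k:ℕ), by omega⟩ = t * u ⟨(k:ℕ), by omega⟩ := rfl
        have hkk : k ≠ k₀ := by
          intro h
          rw [h] at hk
          exact hk₀ hk
        rw [h1, hu _ hk, PiLp.smul_apply, EuclideanSpace.single_apply, if_neg hkk]
        simp
      · rw [FoldAux.fold_apply_high i _ k hk, FoldAux.qf_smul]
        have hkk : k = k₀ := by
          apply Fin.ext
          simp only [hk₀def]
          omega
        rw [hkk, PiLp.smul_apply, EuclideanSpace.single_apply, if_pos rfl]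
        simp
    have heq : ∀ᶠ t : ℝ in 𝓝[≠] 0,
        qf m n i' (Φ (t • u))
          = Ψ ((t ^ 2 * qf m n i u) • EuclideanSpace.single k₀ 1) k₀ := by
      filter_upwards [hmemU u] with t ht
      have h2 := hconj _ ht
      calc qf m n i' (Φ (t • u)) = foldNormalForm m n i' (Φ (t • u)) k₀ :=
            (FoldAux.fold_apply_high i' _ k₀ hk₀).symm
        _ = Ψ (foldNormalForm m n i (t • u)) k₀ := by rw [h2]
        _ = _ := by rw [hfold t]
    have hR : Tendsto (fun t : ℝ =>
        (t ^ 2)⁻¹ * (Ψ ((t ^ 2 * qf m n i u) • EuclideanSpace.single k₀ 1) k₀))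
        (𝓝[≠] (0:ℝ)) (𝓝 (c * qf m n i u)) := by
      by_cases hq0 : qf m n i u = 0
      · have hfun : (fun t : ℝ =>
            (t ^ 2)⁻¹ * (Ψ ((t ^ 2 * qf m n i u) • EuclideanSpace.single k₀ 1) k₀))
            = fun _ : ℝ => (0:ℝ) := by
          funext t
          rw [hq0, mul_zero, zero_smul, hΨ0]
          try simp
        rw [hfun, hq0, mul_zero]
        exact tendsto_const_nhds
      · have hs : Tendsto (fun t : ℝ => t ^ 2 * qf m n i u) (𝓝[≠] (0:ℝ)) (𝓝[≠] (0:ℝ)) := by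
          apply tendsto_nhdsWithin_of_tendsto_nhds_of_eventually_within
          · have hcont : Tendsto (fun t : ℝ => t ^ 2 * qf m n i u) (𝓝 (0:ℝ))
                (𝓝 ((0:ℝ) ^ 2 * qf m n i u)) :=
              ((continuous_pow 2).mul continuous_const).tendsto 0
            simpa using hcont.mono_left nhdsWithin_le_nhds
          · filter_upwards [eventually_mem_nhdsWithin] with t ht
            simp only [Set.mem_compl_iff, Set.mem_singleton_iff] at ht ⊢
            exact mul_ne_zero (pow_ne_zero _ ht) hq0
        have h3 := (hψlim (EuclideanSpace.single k₀ 1)).comp hs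
        have h4 := h3.const_mul (qf m n i u)
        rw [mul_comm c]
        refine h4.congr fun t => ?_
        show qf m n i u * ((t ^ 2 * qf m n i u)⁻¹ * _) = _
        rw [mul_inv]
        field_simp
    have hL' := (hQlim u).congr' (heq.mono fun t ht => by rw [ht])
    exact tendsto_nhds_unique hL' hR
  -- last row of D
  have key2 : ∀ j : Fin n, (j : ℕ) < n - 1 → D (EuclideanSpace.single j 1) k₀ = 0 := by
    intro j hj
    set u : EuclideanSpace ℝ (Fin m) := EuclideanSpace.single (⟨(j:ℕ), by omega⟩ : Fin m) 1
      with hudef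
    have hfold : ∀ t : ℝ, foldNormalForm m n i (t • u) = t • EuclideanSpace.single j (1:ℝ) := by
      intro t
      apply PiLp.ext
      intro r
      by_cases hr : (r : ℕ) < n - 1
      · rw [FoldAux.fold_apply_low i hnm _ r hr]
        have h1 : (t • u) ⟨(r:ℕ), by omega⟩ = t * u ⟨(r:ℕ), by omega⟩ := rfl
        rw [h1, PiLp.smul_apply, smul_eq_mul, hudef]
        rw [EuclideanSpace.single_apply, EuclideanSpace.single_apply]
        congr 1
        simp [Fin.ext_iff]
      · rw [FoldAux.fold_apply_high i _ r hr, FoldAux.qf_smul]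
        have hq : qf m n i u = 0 := by
          apply Finset.sum_eq_zero
          intro j' _
          by_cases hj1 : (j' : ℕ) < n - 1
          · simp [hj1]
          · have hz : u j' = 0 := by
              rw [hudef, EuclideanSpace.single_apply, if_neg]
              intro h
              rw [Fin.ext_iff] at h
              simp at h
              omega
            simp [hj1, hz]
        rw [hq, PiLp.smul_apply, EuclideanSpace.single_apply, if_neg (by
          intro h
          rw [Fin.ext_iff] at h
          omega)]
        simp
    have heq : ∀ᶠ t : ℝ in 𝓝[≠] 0,
        qf m n i' (Φ (t • u)) = Ψ (t • EuclideanSpace.single j 1) k₀ := by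
      filter_upwards [hmemU u] with t ht
      have h2 := hconj _ ht
      calc qf m n i' (Φ (t • u)) = foldNormalForm m n i' (Φ (t • u)) k₀ :=
            (FoldAux.fold_apply_high i' _ k₀ hk₀).symm
        _ = Ψ (foldNormalForm m n i (t • u)) k₀ := by rw [h2]
        _ = _ := by rw [hfold t]
    have hLz : Tendsto (fun t : ℝ => t⁻¹ * qf m n i' (Φ (t • u))) (𝓝[≠] (0:ℝ)) (𝓝 0) := by
      have hid : Tendsto (fun t : ℝ => t) (𝓝[≠] (0:ℝ)) (𝓝 (0:ℝ)) :=
        (continuous_id.tendsto 0).mono_left nhdsWithin_le_nhds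
      have hmul := hid.mul (hQlim u)
      rw [zero_mul] at hmul
      refine hmul.congr' ?_
      filter_upwards [eventually_mem_nhdsWithin] with t ht
      simp only [Set.mem_compl_iff, Set.mem_singleton_iff] at ht
      field_simp
    have hRz := hψlim (EuclideanSpace.single j 1)
    have hL2 := hLz.congr' (heq.mono fun t ht => by rw [ht])
    exact (tendsto_nhds_unique hL2 hRz).symm
  -- injectivity of D and c ≠ 0
  have h0V' : (0 : EuclideanSpace ℝ (Fin n)) ∈ V' := by
    rw [← hΨim]; exact ⟨0, h0V, hΨ0⟩
  have hΨinvdiff : DifferentiableAt ℝ Ψinv 0 :=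
    (hΨinvsm.contDiffAt (hV'open.mem_nhds h0V')).differentiableAt (by simp)
  set B := fderiv ℝ Ψinv 0 with hBdef
  have hB : HasFDerivAt Ψinv B (Ψ 0) := by rw [hΨ0]; exact hΨinvdiff.hasFDerivAt
  have hcomp : HasFDerivAt (Ψinv ∘ Ψ) (B.comp D) 0 := hB.comp 0 hD
  have hev : Ψinv ∘ Ψ =ᶠ[𝓝 (0 : EuclideanSpace ℝ (Fin n))] id :=
    Filter.eventually_of_mem (hVopen.mem_nhds h0V) (fun y hy => hΨleft y hy)
  have hid' : HasFDerivAt (Ψinv ∘ Ψ) (ContinuousLinearMap.id ℝ _) 0 :=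
    (hasFDerivAt_id 0).congr_of_eventuallyEq hev
  have hBD : B.comp D = ContinuousLinearMap.id ℝ _ := hcomp.unique hid'
  have hDinj : Function.Injective D := by
    intro x y hxy
    have hxy2 : B (D x) = B (D y) := by rw [hxy]
    rwa [← ContinuousLinearMap.comp_apply, ← ContinuousLinearMap.comp_apply, hBD,
      ContinuousLinearMap.id_apply, ContinuousLinearMap.id_apply] at hxy2
  have hc0 : c ≠ 0 := by
    intro hc
    have hl : (((EuclideanSpace.proj k₀).comp D).toLinearMap)
        = (0 : EuclideanSpace ℝ (Fin n) →ₗ[ℝ] ℝ) := by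
      apply Module.Basis.ext ((EuclideanSpace.basisFun (Fin n) ℝ).toBasis)
      intro r
      simp only [ContinuousLinearMap.coe_coe, ContinuousLinearMap.comp_apply,
        LinearMap.zero_apply]
      rw [OrthonormalBasis.coe_toBasis, EuclideanSpace.basisFun_apply]
      show D (EuclideanSpace.single r 1) k₀ = 0
      by_cases hr : (r : ℕ) < n - 1
      · exact key2 r hr
      · have : r = k₀ := by
          apply Fin.ext
          simp only [hk₀def]
          omega
        rw [this]
        exact hc
    have hall : ∀ y : EuclideanSpace ℝ (Fin n), D y k₀ = 0 := by
      intro y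
      have := LinearMap.congr_fun hl y
      simpa using this
    have hsurj : Function.Surjective D := by
      have h2 : Function.Injective (D.toLinearMap) := hDinj
      exact LinearMap.injective_iff_surjective.mp h2
    obtain ⟨y, hy⟩ := hsurj (EuclideanSpace.single k₀ 1)
    have h3 := hall y
    rw [hy] at h3
    simp [EuclideanSpace.single_apply] at h3
  -- counting argument
  have main_ineq : ∀ (a offS b offT : ℕ), n - 1 ≤ offS →
      (∀ w : Fin a → ℝ, w ≠ 0 →
        (∀ j : Fin m, offT ≤ (j : ℕ) → (j : ℕ) < offT + b → A (FoldAux.bIn m a offS w) j = 0) →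
        False) → a ≤ b := by
    intro a offS b offT hoffS hcontra
    apply FoldAux.le_of_inj
      ((FoldAux.bOut m b offT).comp
        (((A : EuclideanSpace ℝ (Fin m) →ₗ[ℝ] EuclideanSpace ℝ (Fin m))).comp
          (FoldAux.bIn m a offS)))
    refine (injective_iff_map_eq_zero _).mpr ?_
    intro w hw0
    by_contra hne
    apply hcontra w hne
    intro j hj1 hj2
    have hcf := congrFun hw0 (⟨(j : ℕ) - offT, by omega⟩ : Fin b)
    simp only [LinearMap.coe_comp, Function.comp_apply, Pi.zero_apply] at hcf
    simp only [FoldAux.bOut, LinearMap.coe_mk, AddHom.coe_mk] at hcf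
    rw [dif_pos (by omega : offT + ((j : ℕ) - offT) < m)] at hcf
    have hje : (⟨offT + ((j : ℕ) - offT), by omega⟩ : Fin m) = j := by
      apply Fin.ext
      simp
      omega
    rw [hje] at hcf
    simpa using hcf
  have hi'lt : i' < m - n + 1 := by omega
  have hilt : i < m - n + 1 := by omega
  rcases lt_or_gt_of_ne hc0 with hneg | hpos
  · -- c < 0
    have e1 : i ≤ (m - n + 1) - i' := by
      refine main_ineq i (m - i) ((m - n + 1) - i') (n - 1) (by omega) ?_
      intro w hwne hz
      have hx := key (FoldAux.bIn m i (m - i) w)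
        (fun j hj => FoldAux.bIn_apply_of_lt _ _ _ _ _ (by omega))
      have hsrc : qf m n i (FoldAux.bIn m i (m - i) w) < 0 :=
        FoldAux.qf_bIn_neg m n i (by omega) (by omega) hwne
      have htgt : qf m n i' (A (FoldAux.bIn m i (m - i) w)) ≤ 0 :=
        FoldAux.qf_nonpos_of_mid_zero m n i' _
          (fun j hj1 hj2 => hz j (by omega) (by omega))
      have := mul_pos_of_neg_of_neg hneg hsrc
      linarith
    have e2 : (m - n + 1) - i ≤ i' := by
      refine main_ineq ((m - n + 1) - i) (n - 1) i' (m - i') (le_refl _) ?_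
      intro w hwne hz
      have hx := key (FoldAux.bIn m ((m - n + 1) - i) (n - 1) w)
        (fun j hj => FoldAux.bIn_apply_of_lt _ _ _ _ _ (by omega))
      have hsrc : 0 < qf m n i (FoldAux.bIn m ((m - n + 1) - i) (n - 1) w) :=
        FoldAux.qf_bIn_pos m n i ((m - n + 1) - i) (by omega) (by omega) hwne
      have htgt : 0 ≤ qf m n i' (A (FoldAux.bIn m ((m - n + 1) - i) (n - 1) w)) :=
        FoldAux.qf_nonneg_of_high_zero m n i' _
          (fun j hj => hz j (by omega) (by omega))
      have := mul_neg_of_neg_of_pos hneg hsrc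
      linarith
    omega
  · -- c > 0
    have e1 : i ≤ i' := by
      refine main_ineq i (m - i) i' (m - i') (by omega) ?_
      intro w hwne hz
      have hx := key (FoldAux.bIn m i (m - i) w)
        (fun j hj => FoldAux.bIn_apply_of_lt _ _ _ _ _ (by omega))
      have hsrc : qf m n i (FoldAux.bIn m i (m - i) w) < 0 :=
        FoldAux.qf_bIn_neg m n i (by omega) (by omega) hwne
      have htgt : 0 ≤ qf m n i' (A (FoldAux.bIn m i (m - i) w)) :=
        FoldAux.qf_nonneg_of_high_zero m n i' _
          (fun j hj => hz j (by omega) (by omega))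
      have := mul_neg_of_pos_of_neg hpos hsrc
      linarith
    have e2 : (m - n + 1) - i ≤ (m - n + 1) - i' := by
      refine main_ineq ((m - n + 1) - i) (n - 1) ((m - n + 1) - i') (n - 1) (le_refl _) ?_
      intro w hwne hz
      have hx := key (FoldAux.bIn m ((m - n + 1) - i) (n - 1) w)
        (fun j hj => FoldAux.bIn_apply_of_lt _ _ _ _ _ (by omega))
      have hsrc : 0 < qf m n i (FoldAux.bIn m ((m - n + 1) - i) (n - 1) w) :=
        FoldAux.qf_bIn_pos m n i ((m - n + 1) - i) (by omega) (by omega) hwne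
      have htgt : qf m n i' (A (FoldAux.bIn m ((m - n + 1) - i) (n - 1) w)) ≤ 0 :=
        FoldAux.qf_nonpos_of_mid_zero m n i' _
          (fun j hj1 hj2 => hz j (by omega) (by omega))
      have := mul_pos hpos hsrc
      linarith
    omega
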